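/- With the same hypotheses as the previous statement (|ω² + νk²π²/a²| ≥ C0(Ω²+k²) for all k ≥ 1, and Z ≤ Ω), the resolvent also gains two derivatives: Σ_k (1+νk²+νZ²)^{σ+2} |g_k|² ≤ C Σ_k (1+νk²+νZ²)^σ |f_k|², i.e., ||g||_{σ+2,Z} ≤ C ||f||_{σ,Z}, with C depending only on C0 and ν. -/

import Mathlib

theorem stmt_12 (C0 ν : ℝ) (hC0 : 0 < C0) (hν : 0 < ν) :
    ∃ C > 0, ∀ (a Ω Z σ : ℝ) (ω : ℂ) (f : ℕ → ℂ),
      0 < a → 1 ≤ Ω → 0 ≤ Z → Z ≤ Ω →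
      (∀ k : ℕ, 1 ≤ k →
        C0 * (Ω^2 + (k:ℝ)^2) ≤ ‖ω^2 + (↑(ν * (k:ℝ)^2 * Real.pi^2 / a^2) : ℂ)‖) →
      Summable (fun k : ℕ => (1 + ν*(k+1:ℝ)^2 + ν*Z^2) ^ σ * ‖f (k+1)‖ ^ 2) →
      (∑' k : ℕ, (1 + ν*(k+1:ℝ)^2 + ν*Z^2) ^ (σ+2) *
          ‖f (k+1) / (ω^2 + (↑(ν * (k+1:ℝ)^2 * Real.pi^2 / a^2) : ℂ))‖ ^ 2)
        ≤ C * ∑' k : ℕ, (1 + ν*(k+1:ℝ)^2 + ν*Z^2) ^ σ * ‖f (k+1)‖ ^ 2 := by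
  refine ⟨((1+ν)/C0)^2, by positivity, ?_⟩
  intro a Ω Z σ ω f ha hΩ hZ hZΩ hres hf
  have key : ∀ k : ℕ, (1 + ν*(k+1:ℝ)^2 + ν*Z^2) ^ (σ+2) *
      ‖f (k+1) / (ω^2 + (↑(ν * (k+1:ℝ)^2 * Real.pi^2 / a^2) : ℂ))‖ ^ 2
      ≤ ((1+ν)/C0)^2 * ((1 + ν*(k+1:ℝ)^2 + ν*Z^2) ^ σ * ‖f (k+1)‖ ^ 2) := by
    intro k
    set x : ℝ := 1 + ν*(k+1:ℝ)^2 + ν*Z^2 with hxdef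
    have hxpos : 0 < x := by positivity
    have hres' := hres (k+1) (by omega)
    simp only [Nat.cast_add, Nat.cast_one] at hres'
    set D : ℝ := ‖ω^2 + (↑(ν * (k+1:ℝ)^2 * Real.pi^2 / a^2) : ℂ)‖ with hDdef
    have hDpos : 0 < D := lt_of_lt_of_le (by positivity) hres'
    have hΩ2 : 1 ≤ Ω^2 := one_le_pow₀ hΩ
    have hxle : x ≤ (1+ν)/C0 * D := by
      have h1 : x ≤ (1+ν) * (Ω^2 + (k+1:ℝ)^2) := by
        have hZ2 : Z^2 ≤ Ω^2 := by nlinarith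
        nlinarith
      have h2 : (1+ν) * (Ω^2 + (k+1:ℝ)^2) ≤ (1+ν)/C0 * D := by
        rw [div_mul_eq_mul_div, le_div_iff₀ hC0]
        calc (1+ν) * (Ω^2 + (k+1:ℝ)^2) * C0
            = (1+ν) * (C0 * (Ω^2 + (k+1:ℝ)^2)) := by ring
          _ ≤ (1+ν) * D := by
              apply mul_le_mul_of_nonneg_left hres' (by linarith)
      linarith
    have hsplit : x ^ (σ+2) = x^σ * x^2 := by
      rw [Real.rpow_add hxpos, show (2:ℝ) = ((2:ℕ):ℝ) by norm_num, Real.rpow_natCast]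
    rw [hsplit, norm_div, div_pow]
    have hxσ : (0:ℝ) ≤ x ^ σ := Real.rpow_nonneg hxpos.le σ
    have hratio : x^2 / D^2 ≤ ((1+ν)/C0)^2 := by
      rw [div_le_iff₀ (by positivity)]
      calc x^2 ≤ ((1+ν)/C0 * D)^2 := by
            apply pow_le_pow_left₀ hxpos.le hxle
        _ = ((1+ν)/C0)^2 * D^2 := by ring
    have hF : (0:ℝ) ≤ ‖f (k+1)‖ ^ 2 := by positivity
    calc x ^ σ * x ^ 2 * (‖f (k+1)‖ ^ 2 / D ^ 2)
        = (x^2 / D^2) * (x ^ σ * ‖f (k+1)‖ ^ 2) := by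
          field_simp
      _ ≤ ((1+ν)/C0)^2 * (x ^ σ * ‖f (k+1)‖ ^ 2) := by
          apply mul_le_mul_of_nonneg_right hratio (by positivity)
  have hsum2 : Summable (fun k : ℕ => ((1+ν)/C0)^2 *
      ((1 + ν*(k+1:ℝ)^2 + ν*Z^2) ^ σ * ‖f (k+1)‖ ^ 2)) := hf.mul_left _
  have hLHS : Summable (fun k : ℕ => (1 + ν*(k+1:ℝ)^2 + ν*Z^2) ^ (σ+2) *
      ‖f (k+1) / (ω^2 + (↑(ν * (k+1:ℝ)^2 * Real.pi^2 / a^2) : ℂ))‖ ^ 2) := by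
    apply Summable.of_nonneg_of_le _ key hsum2
    intro k
    have : (0:ℝ) < 1 + ν*(k+1:ℝ)^2 + ν*Z^2 := by positivity
    positivity
  calc (∑' k : ℕ, (1 + ν*(k+1:ℝ)^2 + ν*Z^2) ^ (σ+2) *
          ‖f (k+1) / (ω^2 + (↑(ν * (k+1:ℝ)^2 * Real.pi^2 / a^2) : ℂ))‖ ^ 2)
      ≤ ∑' k : ℕ, ((1+ν)/C0)^2 *
          ((1 + ν*(k+1:ℝ)^2 + ν*Z^2) ^ σ * ‖f (k+1)‖ ^ 2) :=
        Summable.tsum_le_tsum key hLHS hsum2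
    _ = ((1+ν)/C0)^2 * ∑' k : ℕ, (1 + ν*(k+1:ℝ)^2 + ν*Z^2) ^ σ *
          ‖f (k+1)‖ ^ 2 := tsum_mul_left
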